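/- Let k ≥ 1, a = π/(2k), s coprime with k, and let σ_s ⊂ S² be the union of half-circles of spherical radii (1+2i)a (i = 0,…,k−1) around x₀ in the closed upper hemisphere and around y₀ in the closed lower hemisphere, where x₀, y₀ lie on the equator at distance 2as. Then every point of S² lies within spherical distance a of σ_s, and the set of points at distance exactly a from σ_s on the 'positive' side is the analogous union of families of half-circles of radii 2a·i and (2+4i)a (a curve with two boundary points on the equator). -/

import Mathlib

open Real

/-- The intrinsic (angular) distance between points of the unit sphere in `ℝ³`. -/
noncomputable def sphereDist (p q : EuclideanSpace ℝ (Fin 3)) : ℝ :=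
  Real.arccos (inner ℝ p q)

/-- The curve `σ_s ⊂ S²`: the union of the half-circles of spherical radii
`(1+2i)·π/(2k)`, `i = 0, …, k-1`, around `x₀` in the closed upper hemisphere and
around `y₀` in the closed lower hemisphere. -/
def sigmaSphere (k : ℕ) (x₀ y₀ : EuclideanSpace ℝ (Fin 3)) :
    Set (EuclideanSpace ℝ (Fin 3)) :=
  {p | p ∈ Metric.sphere (0 : EuclideanSpace ℝ (Fin 3)) 1 ∧ 0 ≤ p 2 ∧
        ∃ i : ℕ, i < k ∧ sphereDist p x₀ = (1 + 2 * i) * (π / (2 * k))} ∪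
  {p | p ∈ Metric.sphere (0 : EuclideanSpace ℝ (Fin 3)) 1 ∧ p 2 ≤ 0 ∧
        ∃ i : ℕ, i < k ∧ sphereDist p y₀ = (1 + 2 * i) * (π / (2 * k))}



open scoped RealInnerProductSpace

abbrev V3 := EuclideanSpace ℝ (Fin 3)

lemma arccos_le_arccos' {x y : ℝ} (h : x ≤ y) : arccos y ≤ arccos x := by
  unfold Real.arccos
  have := Real.monotone_arcsin h
  linarith

lemma inner_abs_le_one {x y : V3} (hx : ‖x‖ = 1) (hy : ‖y‖ = 1) : |⟪x, y⟫| ≤ 1 := by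
  have := abs_real_inner_le_norm x y
  rwa [hx, hy, mul_one] at this

lemma norm_sub_proj_sq {x y : V3} (hx : ‖x‖ = 1) (hy : ‖y‖ = 1) :
    ‖x - ⟪x, y⟫ • y‖ ^ 2 = 1 - ⟪x, y⟫ ^ 2 := by
  rw [norm_sub_sq_real, inner_smul_right, norm_smul, hx]
  simp [hy, mul_pow, sq_abs]
  ring

lemma norm_sub_proj {x y : V3} (hx : ‖x‖ = 1) (hy : ‖y‖ = 1) :
    ‖x - ⟪x, y⟫ • y‖ = Real.sin (Real.arccos ⟪x, y⟫) := by
  rw [Real.sin_arccos, ← norm_sub_proj_sq hx hy, Real.sqrt_sq (norm_nonneg _)]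

/-- Spherical triangle inequality. -/
lemma sphereDist_triangle {x y z : V3} (hx : ‖x‖ = 1) (hy : ‖y‖ = 1) (hz : ‖z‖ = 1) :
    sphereDist x z ≤ sphereDist x y + sphereDist y z := by
  unfold sphereDist
  set α := arccos ⟪x, y⟫ with hα
  set β := arccos ⟪y, z⟫ with hβ
  rcases le_or_gt π (α + β) with h | h
  · exact le_trans (Real.arccos_le_pi _) h
  · have hxy := inner_abs_le_one hx hy
    have hyz := inner_abs_le_one hy hz
    have hzy : (⟪z, y⟫ : ℝ) = ⟪y, z⟫ := real_inner_comm y z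
    have hcosα : Real.cos α = ⟪x, y⟫ :=
      Real.cos_arccos (neg_le_of_abs_le hxy) (le_of_abs_le hxy)
    have hcosβ : Real.cos β = ⟪y, z⟫ :=
      Real.cos_arccos (neg_le_of_abs_le hyz) (le_of_abs_le hyz)
    set x' := x - ⟪x, y⟫ • y with hx'
    set z' := z - ⟪z, y⟫ • y with hz'
    have hnx' : ‖x'‖ = Real.sin α := norm_sub_proj hx hy
    have hnz' : ‖z'‖ = Real.sin β := by
      rw [hz', norm_sub_proj hz hy, hzy]
    have hkey : (⟪x, z⟫ : ℝ) = ⟪x, y⟫ * ⟪y, z⟫ + ⟪x', z'⟫ := by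
      have hyy : (⟪y, y⟫ : ℝ) = 1 := by
        rw [real_inner_self_eq_norm_sq, hy]; norm_num
      simp only [hx', hz', inner_sub_left, inner_sub_right, real_inner_smul_left,
        real_inner_smul_right, hyy]
      rw [show (⟪y,z⟫:ℝ) = ⟪z,y⟫ from (real_inner_comm y z).symm]
      ring
    have hCS : -(‖x'‖ * ‖z'‖) ≤ ⟪x', z'⟫ :=
      neg_le_of_abs_le (abs_real_inner_le_norm x' z')
    have hle : Real.cos (α + β) ≤ ⟪x, z⟫ := by
      rw [Real.cos_add, hcosα, hcosβ, hkey]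
      rw [hnx', hnz'] at hCS
      linarith
    calc arccos ⟪x, z⟫ ≤ arccos (Real.cos (α + β)) := arccos_le_arccos' hle
      _ = α + β := Real.arccos_cos (add_nonneg (hα ▸ Real.arccos_nonneg _) (hβ ▸ Real.arccos_nonneg _)) h.le


lemma sphereDist_comm (p q : V3) : sphereDist p q = sphereDist q p := by
  unfold sphereDist
  rw [real_inner_comm]

lemma sphereDist_nonneg (p q : V3) : 0 ≤ sphereDist p q := Real.arccos_nonneg _

lemma sphereDist_le_pi (p q : V3) : sphereDist p q ≤ π := Real.arccos_le_pi _

lemma norm_eq_one_of_sq {q : V3} (h : ‖q‖ ^ 2 = 1) : ‖q‖ = 1 := by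
  have h0 := norm_nonneg q
  nlinarith

/-- Given a unit vector `u` orthogonal to `x` in the "direction" of `p` from `x`,
build the point `q` at distance `r` from `x` on the geodesic through `x` and `p`. -/
lemma exists_q {x u p : V3} (hx : ‖x‖ = 1) (hu : ‖u‖ = 1) (hxu : (⟪x, u⟫ : ℝ) = 0)
    (hp : ‖p‖ = 1) (hpu : (⟪p, u⟫ : ℝ) = Real.sin (sphereDist p x)) (hx2 : x 2 = 0)
    {r : ℝ} (hr0 : 0 ≤ r) (hrπ : r ≤ π) :
    ∃ q : V3, ‖q‖ = 1 ∧ sphereDist q x = r ∧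
      sphereDist p q = |sphereDist p x - r| ∧ q 2 = Real.sin r * u 2 := by
  have hux : (⟪u, x⟫ : ℝ) = 0 := by rw [real_inner_comm]; exact hxu
  have hc1 := inner_abs_le_one hp hx
  set c : ℝ := ⟪p, x⟫ with hc
  set d : ℝ := sphereDist p x with hd
  have hcosd : Real.cos d = c :=
    Real.cos_arccos (neg_le_of_abs_le hc1) (le_of_abs_le hc1)
  have hd0 : 0 ≤ d := Real.arccos_nonneg _
  have hdπ : d ≤ π := Real.arccos_le_pi _
  refine ⟨Real.cos r • x + Real.sin r • u, ?_, ?_, ?_, ?_⟩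
  · apply norm_eq_one_of_sq
    rw [← real_inner_self_eq_norm_sq]
    simp only [inner_add_left, inner_add_right, real_inner_smul_left, real_inner_smul_right,
      hxu, hux]
    rw [real_inner_self_eq_norm_sq, real_inner_self_eq_norm_sq, hx, hu]
    have := Real.sin_sq_add_cos_sq r
    ring_nf
    nlinarith [Real.sin_sq_add_cos_sq r]
  · unfold sphereDist
    have : (⟪Real.cos r • x + Real.sin r • u, x⟫ : ℝ) = Real.cos r := by
      simp only [inner_add_left, real_inner_smul_left, hux]
      rw [real_inner_self_eq_norm_sq, hx]
      ring
    rw [show (inner ℝ (Real.cos r • x + Real.sin r • u) x : ℝ) = Real.cos r from this]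
    exact Real.arccos_cos hr0 hrπ
  · unfold sphereDist
    have hpq : (⟪p, Real.cos r • x + Real.sin r • u⟫ : ℝ) = Real.cos (d - r) := by
      simp only [inner_add_right, real_inner_smul_right, ← hc, hpu, ← hd]
      rw [Real.cos_sub, hcosd]
      ring
    rw [show (inner ℝ p (Real.cos r • x + Real.sin r • u) : ℝ) = Real.cos (d - r) from hpq]
    rw [← Real.cos_abs (d - r)]
    refine Real.arccos_cos (abs_nonneg _) ?_
    rw [abs_le]
    constructor <;> [linarith; linarith]
  · simp only [PiLp.add_apply, PiLp.smul_apply, smul_eq_mul, hx2]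
    ring

/-- A suitable orthogonal direction `u` always exists. -/
lemma exists_u {x p : V3} (hx : ‖x‖ = 1) (hp : ‖p‖ = 1) (hx2 : x 2 = 0) :
    ∃ u : V3, ‖u‖ = 1 ∧ (⟪x, u⟫ : ℝ) = 0 ∧ (⟪p, u⟫ : ℝ) = Real.sin (sphereDist p x) ∧
      (0 ≤ p 2 → 0 ≤ u 2) ∧ (p 2 ≤ 0 → u 2 ≤ 0) := by
  have hc1 := inner_abs_le_one hp hx
  set c : ℝ := ⟪p, x⟫ with hc
  have hsin : Real.sin (sphereDist p x) = ‖p - c • x‖ := (norm_sub_proj hp hx).symm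
  by_cases h0 : p - c • x = 0
  · -- degenerate case : p = ± x ; take the horizontal direction orthogonal to x
    refine ⟨(-(x 1)) • EuclideanSpace.single 0 (1 : ℝ) + (x 0) • EuclideanSpace.single 1 (1 : ℝ),
      ?_, ?_, ?_, ?_, ?_⟩
    · have hxx : x 0 ^ 2 + x 1 ^ 2 = 1 := by
        have h := real_inner_self_eq_norm_sq x
        rw [hx] at h
        simp only [PiLp.inner_apply, RCLike.inner_apply, conj_trivial, Fin.sum_univ_three,
          hx2, mul_zero, add_zero, one_pow] at h
        nlinarith
      apply norm_eq_one_of_sq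
      rw [← real_inner_self_eq_norm_sq]
      simp only [inner_add_left, inner_add_right, real_inner_smul_left, real_inner_smul_right,
        EuclideanSpace.inner_single_left, EuclideanSpace.single_apply, PiLp.add_apply,
        PiLp.smul_apply, smul_eq_mul, conj_trivial]
      norm_num
      nlinarith
    · simp only [inner_add_right, real_inner_smul_right, EuclideanSpace.inner_single_right,
        conj_trivial]
      ring
    · have hpc : p = c • x := by rwa [sub_eq_zero] at h0
      rw [hsin, h0, norm_zero, hpc]
      simp only [inner_add_right, real_inner_smul_left, real_inner_smul_right,
        EuclideanSpace.inner_single_right, conj_trivial, PiLp.smul_apply, smul_eq_mul]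
      ring
    · intro _
      simp [EuclideanSpace.single_apply]
    · intro _
      simp [EuclideanSpace.single_apply]
  · set n : ℝ := ‖p - c • x‖ with hn
    have hnpos : 0 < n := by
      rw [hn]
      exact norm_pos_iff.mpr h0
    have hnsq : n ^ 2 = 1 - c ^ 2 := norm_sub_proj_sq hp hx
    refine ⟨n⁻¹ • (p - c • x), ?_, ?_, ?_, ?_, ?_⟩
    · rw [norm_smul, ← hn, norm_inv, Real.norm_eq_abs, abs_of_pos hnpos]
      field_simp
    · rw [real_inner_smul_right, inner_sub_right, real_inner_smul_right,
        real_inner_self_eq_norm_sq, hx]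
      rw [show (⟪x, p⟫ : ℝ) = c from real_inner_comm p x]
      ring
    · rw [hsin, real_inner_smul_right, inner_sub_right, real_inner_smul_right,
        real_inner_self_eq_norm_sq, hp, ← hc]
      have h1 : (1 : ℝ) ^ 2 - c * c = n ^ 2 := by rw [hnsq]; ring
      rw [h1]
      field_simp
    · intro hp2
      simp only [PiLp.smul_apply, PiLp.sub_apply, smul_eq_mul, hx2, mul_zero, sub_zero]
      positivity
    · intro hp2
      simp only [PiLp.smul_apply, PiLp.sub_apply, smul_eq_mul, hx2, mul_zero, sub_zero]
      exact mul_nonpos_of_nonneg_of_nonpos (by positivity) hp2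

lemma choose_index (k : ℕ) (hk : 1 ≤ k) {d : ℝ} (hd0 : 0 ≤ d) (hdπ : d ≤ π) :
    ∃ i : ℕ, i < k ∧ 2 * i * (π / (2 * k)) ≤ d ∧ d ≤ (2 * i + 2) * (π / (2 * k)) := by
  have hk0 : (0 : ℝ) < (k : ℝ) := by exact_mod_cast hk
  set a : ℝ := π / (2 * k) with ha
  have hapos : 0 < a := by
    rw [ha]
    positivity
  have h2a : 0 < 2 * a := by linarith
  have hπ : (2 * (k : ℝ)) * a = π := by
    rw [ha]
    field_simp
  refine ⟨min (k - 1) (Nat.floor (d / (2 * a))), ?_, ?_, ?_⟩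
  · exact lt_of_le_of_lt (min_le_left _ _) (Nat.sub_lt hk one_pos)
  · have h1 : ((min (k - 1) (Nat.floor (d / (2 * a))) : ℕ) : ℝ) ≤ d / (2 * a) := by
      calc ((min (k - 1) (Nat.floor (d / (2 * a))) : ℕ) : ℝ)
          ≤ ((Nat.floor (d / (2 * a)) : ℕ) : ℝ) := by
            exact_mod_cast min_le_right _ _
        _ ≤ d / (2 * a) := Nat.floor_le (by positivity)
    rw [le_div_iff₀ h2a] at h1
    linarith
  · rcases le_or_gt (Nat.floor (d / (2 * a))) (k - 1) with hcase | hcase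
    · rw [min_eq_right hcase]
      have h1 : d / (2 * a) < Nat.floor (d / (2 * a)) + 1 := Nat.lt_floor_add_one _
      rw [div_lt_iff₀ h2a] at h1
      linarith
    · rw [min_eq_left hcase.le]
      have hcast : ((k - 1 : ℕ) : ℝ) = (k : ℝ) - 1 := by
        rw [Nat.cast_sub hk]
        norm_num
      rw [hcast]
      calc d ≤ π := hdπ
        _ = (2 * ((k : ℝ) - 1) + 2) * a := by rw [← hπ]; ring

/-- Key step for the covering half: around a unit vector `x` on the equator,
any unit vector `p` is within `a` of one of the half-circles (on the correct side). -/
lemma covering_step (k : ℕ) (hk : 1 ≤ k) {x p : V3} (hx : ‖x‖ = 1) (hp : ‖p‖ = 1)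
    (hx2 : x 2 = 0) :
    ∃ q : V3, ‖q‖ = 1 ∧ (0 ≤ p 2 → 0 ≤ q 2) ∧ (p 2 ≤ 0 → q 2 ≤ 0) ∧
      (∃ i : ℕ, i < k ∧ sphereDist q x = (1 + 2 * i) * (π / (2 * k))) ∧
      sphereDist p q ≤ π / (2 * k) := by
  have hk0 : (0 : ℝ) < (k : ℝ) := by exact_mod_cast hk
  set a : ℝ := π / (2 * k) with ha
  have hapos : 0 < a := by rw [ha]; positivity
  have hπ : (2 * (k : ℝ)) * a = π := by rw [ha]; field_simp
  obtain ⟨i, hik, hlo, hhi⟩ :=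
    choose_index k hk (sphereDist_nonneg p x) (sphereDist_le_pi p x)
  obtain ⟨u, hu, hxu, hpu, hu2p, hu2n⟩ := exists_u hx hp hx2
  have hik' : ((i : ℝ) + 1) ≤ (k : ℝ) := by exact_mod_cast hik
  have hr0 : 0 ≤ (1 + 2 * (i : ℝ)) * a := by positivity
  have hrπ : (1 + 2 * (i : ℝ)) * a ≤ π := by
    rw [← hπ]
    have : (1 + 2 * (i : ℝ)) ≤ 2 * (k : ℝ) := by linarith
    nlinarith
  obtain ⟨q, hq, hqx, hpq, hq2⟩ := exists_q hx hu hxu hp hpu hx2 hr0 hrπ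
  have hsin : 0 ≤ Real.sin ((1 + 2 * (i : ℝ)) * a) := Real.sin_nonneg_of_nonneg_of_le_pi hr0 hrπ
  refine ⟨q, hq, ?_, ?_, ⟨i, hik, hqx⟩, ?_⟩
  · intro h
    rw [hq2]
    exact mul_nonneg hsin (hu2p h)
  · intro h
    rw [hq2]
    exact mul_nonpos_of_nonneg_of_nonpos hsin (hu2n h)
  · rw [hpq, abs_le]
    constructor <;> nlinarith

/-- Every point of `S²` lies within spherical distance `a = π/(2k)` of `σ_s`,
and this bound is attained: some point of `S²` has spherical distance at least
`a` from every point of `σ_s`. -/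
theorem sigmaSphere_neighborhood (k s : ℕ) (hk : 1 ≤ k)
    (hcop : Nat.Coprime s k)
    (x₀ y₀ : EuclideanSpace ℝ (Fin 3))
    (hx : x₀ ∈ Metric.sphere (0 : EuclideanSpace ℝ (Fin 3)) 1) (hx2 : x₀ 2 = 0)
    (hy : y₀ ∈ Metric.sphere (0 : EuclideanSpace ℝ (Fin 3)) 1) (hy2 : y₀ 2 = 0)
    (hdist : sphereDist x₀ y₀ = 2 * s * (π / (2 * k))) :
    (∀ p ∈ Metric.sphere (0 : EuclideanSpace ℝ (Fin 3)) 1,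
      ∃ q ∈ sigmaSphere k x₀ y₀, sphereDist p q ≤ π / (2 * k)) ∧
    (∃ p ∈ Metric.sphere (0 : EuclideanSpace ℝ (Fin 3)) 1,
      ∀ q ∈ sigmaSphere k x₀ y₀, π / (2 * k) ≤ sphereDist p q) := by
  have hk0 : (0 : ℝ) < (k : ℝ) := by exact_mod_cast hk
  set a : ℝ := π / (2 * k) with ha
  have hapos : 0 < a := by rw [ha]; positivity
  have hx' : ‖x₀‖ = 1 := by rwa [mem_sphere_zero_iff_norm] at hx
  have hy' : ‖y₀‖ = 1 := by rwa [mem_sphere_zero_iff_norm] at hy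
  constructor
  · intro p hp
    have hp' : ‖p‖ = 1 := by rwa [mem_sphere_zero_iff_norm] at hp
    rcases le_total 0 (p 2) with hsgn | hsgn
    · obtain ⟨q, hq, hq2, _, hcirc, hclose⟩ := covering_step k hk hx' hp' hx2
      exact ⟨q, Or.inl ⟨mem_sphere_zero_iff_norm.mpr hq, hq2 hsgn, hcirc⟩, hclose⟩
    · obtain ⟨q, hq, _, hq2, hcirc, hclose⟩ := covering_step k hk hy' hp' hy2
      exact ⟨q, Or.inr ⟨mem_sphere_zero_iff_norm.mpr hq, hq2 hsgn, hcirc⟩, hclose⟩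
  · refine ⟨x₀, hx, ?_⟩
    rintro q (⟨hq1, _, i, hik, hqd⟩ | ⟨hq1, _, i, hik, hqd⟩)
    · rw [sphereDist_comm, hqd]
      have hi0 : (0:ℝ) ≤ (i : ℝ) := Nat.cast_nonneg i
      have : (1 : ℝ) ≤ 1 + 2 * (i : ℝ) := by linarith
      nlinarith
    · have hq' : ‖q‖ = 1 := by rwa [mem_sphere_zero_iff_norm] at hq1
      have t1 : sphereDist x₀ y₀ ≤ sphereDist x₀ q + sphereDist q y₀ :=
        sphereDist_triangle hx' hq' hy'
      have t2 : sphereDist q y₀ ≤ sphereDist q x₀ + sphereDist x₀ y₀ :=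
        sphereDist_triangle hq' hx' hy'
      rw [sphereDist_comm q x₀] at t2
      rw [hdist, hqd] at t1 t2
      rcases le_or_gt s i with hsi | his
      · have hsi' : (s : ℝ) ≤ (i : ℝ) := by exact_mod_cast hsi
        nlinarith
      · have his' : (i : ℝ) + 1 ≤ (s : ℝ) := by exact_mod_cast his
        nlinarith
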